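/- Let R be a commutative ring and a ∈ R, and let f_a be the sequence with f_a(0) = 0, f_a(1) = 1, f_a(n+2) = a·f_a(n+1) + f_a(n). Then for every natural number n ≥ 1, 2^{n−1} · f_a(n) = Σ_{k odd, 1 ≤ k ≤ n} binom(n, k) · a^{n−k} · (a² + 4)^{(k−1)/2}, where the sum ranges over odd k between 1 and n. (This gives a closed binomial formula for f_a(n), and hence for arbitrary powers of the generalized Tillich–Zémor generators, in any characteristic.) -/

import Mathlib

/-- The sequence `f_a` with `f_a(0) = 0`, `f_a(1) = 1`, `f_a(n+2) = a·f_a(n+1) + f_a(n)`,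
governing the powers of the Tillich–Zémor generator `Y_a = !![a, 1; 1, 0]`. -/
def tzSeq {R : Type*} [CommRing R] (a : R) : ℕ → R
  | 0 => 0
  | 1 => 1
  | n + 2 => a * tzSeq a (n + 1) + tzSeq a n

open Polynomial Finset

section aux
variable {R : Type*} [CommRing R] (a : R)

noncomputable def tzP : R[X] := X ^ 2 - C (a ^ 2 + 4)

theorem tzP_monic : (tzP a).Monic := monic_X_pow_sub_C _ two_ne_zero

noncomputable def tzH : IsAdjoinRootMonic (AdjoinRoot (tzP a)) (tzP a) :=
  AdjoinRoot.isAdjoinRootMonic _ (tzP_monic a)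

theorem tzP_natDegree [Nontrivial R] : (tzP a).natDegree = 2 := natDegree_X_pow_sub_C

theorem tz_nontrivial [Nontrivial R] : Nontrivial (AdjoinRoot (tzP a)) := by
  refine nontrivial_of_ne 0 1 fun e => one_ne_zero (α := R[X]) ?_
  have := congrArg (tzH a).modByMonicHom e.symm
  rwa [map_zero, show (1 : AdjoinRoot (tzP a)) = (tzH a).map 1 by rw [map_one],
    (tzH a).modByMonicHom_map, (Polynomial.modByMonic_eq_self_iff (tzP_monic a)).2] at this
  rw [degree_one, tzP, degree_X_pow_sub_C (by norm_num)]
  decide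

theorem tz_root_sq :
    (tzH a).root ^ 2 = algebraMap R (AdjoinRoot (tzP a)) (a ^ 2 + 4) := by
  have h0 := (tzH a).aeval_root_self
  unfold tzP at h0
  simp only [map_sub, map_pow, aeval_X, aeval_C, sub_eq_zero] at h0
  exact h0

/-- binomial side -/
theorem tz_L1 (n : ℕ) :
    (algebraMap R (AdjoinRoot (tzP a)) a + (tzH a).root) ^ n =
      algebraMap R (AdjoinRoot (tzP a))
        (∑ k ∈ Finset.filter (fun k => ¬ Odd k) (Finset.range (n + 1)),
          (n.choose k : R) * a ^ (n - k) * (a ^ 2 + 4) ^ (k / 2)) +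
      algebraMap R (AdjoinRoot (tzP a))
        (∑ k ∈ Finset.filter (fun k => Odd k) (Finset.range (n + 1)),
          (n.choose k : R) * a ^ (n - k) * (a ^ 2 + 4) ^ ((k - 1) / 2)) * (tzH a).root := by
  rw [add_comm (algebraMap R (AdjoinRoot (tzP a)) a) ((tzH a).root), add_pow]
  rw [← Finset.sum_filter_add_sum_filter_not (Finset.range (n + 1)) (fun k => Odd k)]
  rw [add_comm]
  congr 1
  · rw [map_sum]
    refine Finset.sum_congr rfl fun k hk => ?_
    simp only [Finset.mem_filter] at hk
    obtain ⟨j, hj⟩ := Nat.not_odd_iff_even.mp hk.2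
    have hk2 : k = 2 * (k / 2) := by omega
    calc (tzH a).root ^ k * algebraMap R (AdjoinRoot (tzP a)) a ^ (n - k) * (n.choose k : AdjoinRoot (tzP a))
        = ((tzH a).root ^ 2) ^ (k / 2) * algebraMap R (AdjoinRoot (tzP a)) a ^ (n - k) * (n.choose k : AdjoinRoot (tzP a)) := by
          rw [← pow_mul, ← hk2]
      _ = algebraMap R (AdjoinRoot (tzP a)) ((n.choose k : R) * a ^ (n - k) * (a ^ 2 + 4) ^ (k / 2)) := by
          rw [tz_root_sq]
          simp only [map_mul, map_pow, map_natCast]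
          ring
  · rw [map_sum, Finset.sum_mul]
    refine Finset.sum_congr rfl fun k hk => ?_
    simp only [Finset.mem_filter] at hk
    obtain ⟨m, hm⟩ := hk.2
    have hm2 : (k - 1) / 2 = m := by omega
    calc (tzH a).root ^ k * algebraMap R (AdjoinRoot (tzP a)) a ^ (n - k) * (n.choose k : AdjoinRoot (tzP a))
        = ((tzH a).root ^ 2) ^ m * (tzH a).root * algebraMap R (AdjoinRoot (tzP a)) a ^ (n - k) * (n.choose k : AdjoinRoot (tzP a)) := by
          rw [← pow_mul, ← pow_succ, show 2 * m + 1 = k by omega]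
      _ = algebraMap R (AdjoinRoot (tzP a)) ((n.choose k : R) * a ^ (n - k) * (a ^ 2 + 4) ^ ((k - 1) / 2)) * (tzH a).root := by
          rw [tz_root_sq, hm2]
          simp only [map_mul, map_pow, map_natCast]
          ring

/-- recursive side (shifted to avoid nat subtraction) -/
theorem tz_L2 (n : ℕ) :
    (algebraMap R (AdjoinRoot (tzP a)) a + (tzH a).root) ^ (n + 1) =
      algebraMap R (AdjoinRoot (tzP a))
        (2 ^ n * (2 * tzSeq a (n + 2) - a * tzSeq a (n + 1))) +
      algebraMap R (AdjoinRoot (tzP a)) (2 ^ n * tzSeq a (n + 1)) * (tzH a).root := by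
  induction n with
  | zero =>
    simp only [tzSeq, pow_zero, one_mul, mul_one, mul_zero, add_zero, zero_add, pow_one]
    rw [show (2 : R) * a - a = a by ring, map_one, one_mul]
  | succ m ih =>
    rw [pow_succ, ih]
    have key : ∀ x y : R,
        (algebraMap R (AdjoinRoot (tzP a)) x + algebraMap R (AdjoinRoot (tzP a)) y * (tzH a).root) *
          (algebraMap R (AdjoinRoot (tzP a)) a + (tzH a).root) =
        algebraMap R (AdjoinRoot (tzP a)) (a * x + (a ^ 2 + 4) * y) +
          algebraMap R (AdjoinRoot (tzP a)) (x + a * y) * (tzH a).root := by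
      intro x y
      have e1 : algebraMap R (AdjoinRoot (tzP a)) (a * x + (a ^ 2 + 4) * y) =
          algebraMap R (AdjoinRoot (tzP a)) a * algebraMap R (AdjoinRoot (tzP a)) x +
          algebraMap R (AdjoinRoot (tzP a)) (a ^ 2 + 4) * algebraMap R (AdjoinRoot (tzP a)) y := by
        rw [map_add, map_mul, map_mul]
      have e2 : algebraMap R (AdjoinRoot (tzP a)) (x + a * y) =
          algebraMap R (AdjoinRoot (tzP a)) x +
          algebraMap R (AdjoinRoot (tzP a)) a * algebraMap R (AdjoinRoot (tzP a)) y := by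
        rw [map_add, map_mul]
      rw [e1, e2, ← tz_root_sq]
      ring
    have h1 : a * (2 ^ m * (2 * tzSeq a (m + 2) - a * tzSeq a (m + 1))) +
        (a ^ 2 + 4) * (2 ^ m * tzSeq a (m + 1)) =
        2 ^ (m + 1) * (2 * tzSeq a (m + 1 + 2) - a * tzSeq a (m + 1 + 1)) := by
      rw [show tzSeq a (m + 1 + 2) = a * tzSeq a (m + 2) + tzSeq a (m + 1) from rfl]
      ring
    have h2 : 2 ^ m * (2 * tzSeq a (m + 2) - a * tzSeq a (m + 1)) +
        a * (2 ^ m * tzSeq a (m + 1)) = 2 ^ (m + 1) * tzSeq a (m + 1 + 1) := by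
      ring
    rw [key, h1, h2]

end aux


/-- Binomial closed formula, valid in any commutative ring: for `n ≥ 1`,
`2^(n-1)·f_a(n) = ∑_{k odd, 1 ≤ k ≤ n} C(n,k)·a^(n-k)·(a²+4)^((k-1)/2)`. -/
theorem tzSeq_binomial_formula {R : Type*} [CommRing R] (a : R) (n : ℕ) (hn : 1 ≤ n) :
    (2 : R) ^ (n - 1) * tzSeq a n =
      ∑ k ∈ Finset.filter (fun k => Odd k) (Finset.range (n + 1)),
        (n.choose k : R) * a ^ (n - k) * (a ^ 2 + 4) ^ ((k - 1) / 2) := by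
  nontriviality R
  have := tz_nontrivial a
  obtain ⟨m, rfl⟩ : ∃ m, n = m + 1 := ⟨n - 1, by omega⟩
  have h := (tz_L1 a (m + 1)).symm.trans (tz_L2 a m)
  have hcoeff : ∀ x y x' y' : R,
      algebraMap R (AdjoinRoot (tzP a)) x + algebraMap R (AdjoinRoot (tzP a)) y * (tzH a).root =
      algebraMap R (AdjoinRoot (tzP a)) x' + algebraMap R (AdjoinRoot (tzP a)) y' * (tzH a).root →
      y = y' := by
    intro x y x' y' hxy
    have := congrArg (fun z => (tzH a).coeff z 1) hxy
    simp only [← Algebra.smul_def, map_add, map_smul] at this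
    rw [(tzH a).coeff_algebraMap, (tzH a).coeff_algebraMap,
      (tzH a).coeff_root (by rw [tzP_natDegree]; norm_num)] at this
    simpa using this
  have h2 := hcoeff _ _ _ _ h
  rw [Nat.add_sub_cancel, ← h2]
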